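/- For every odd n ≥ 3 there exists a tree T with exactly n pendent vertices in which all internal vertices have degree 4 except exactly one of degree 3, and for such a tree M_1(T) = 9n - 15. -/

import Mathlib

open scoped Classical

set_option linter.unusedVariables false

namespace Aux5


lemma getVert_mem_support {V : Type*} {G : SimpleGraph V} {u v : V}
    (w : G.Walk u v) (i : ℕ) : w.getVert i ∈ w.support := by
  induction w generalizing i with
  | nil => simp [SimpleGraph.Walk.getVert]
  | cons h q ih =>
    cases i with
    | zero => simp
    | succ n =>
      rw [SimpleGraph.Walk.getVert_cons_succ]
      simp only [SimpleGraph.Walk.support_cons, List.mem_cons]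
      exact Or.inr (ih n)

lemma getVert_eq_zero_of_isPath {V : Type*} {G : SimpleGraph V} {u v : V}
    (w : G.Walk u v) (hw : w.IsPath) {j : ℕ} (hj : j ≤ w.length)
    (h : w.getVert j = u) : j = 0 := by
  cases w with
  | nil => simpa using hj
  | cons hadj q =>
    cases j with
    | zero => rfl
    | succ n =>
      exfalso
      rw [SimpleGraph.Walk.getVert_cons_succ] at h
      rw [SimpleGraph.Walk.cons_isPath_iff] at hw
      exact hw.2 (h ▸ getVert_mem_support q n)

/-- Graph on `Fin m` determined by a parent function. -/
def pg (m : ℕ) (f : ℕ → ℕ) : SimpleGraph (Fin m) where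
  Adj i j := i ≠ j ∧ (f i.val = j.val ∨ f j.val = i.val)
  symm := ⟨fun i j h => ⟨h.1.symm, h.2.symm⟩⟩
  loopless := ⟨fun i h => h.1 rfl⟩

variable {m : ℕ} {f : ℕ → ℕ}

lemma adj_max (hf : ∀ x, 0 < x → x < m → f x < x) (hf0 : f 0 = 0)
    {u x : Fin m} (h : (pg m f).Adj u x) (hx : x ≤ u) : x.val = f u.val := by
  obtain ⟨hne, hc | hc⟩ := h
  · exact hc.symm
  · exfalso
    rcases Nat.eq_zero_or_pos x.val with h0 | hp
    · rw [h0, hf0] at hc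
      exact hne (Fin.ext (by omega : u.val = x.val))
    · have := hf x.val hp x.isLt
      have hxu : x.val ≤ u.val := hx
      omega

lemma pg_acyclic (hf : ∀ x, 0 < x → x < m → f x < x) (hf0 : f 0 = 0) :
    (pg m f).IsAcyclic := by
  intro v c hc
  have hvne : v ∈ c.support := c.start_mem_support
  have hnonempty : c.support.toFinset.Nonempty := ⟨v, List.mem_toFinset.mpr hvne⟩
  set u := c.support.toFinset.max' hnonempty with hu_def
  have hu : u ∈ c.support := List.mem_toFinset.mp (c.support.toFinset.max'_mem hnonempty)
  have hmax : ∀ x ∈ c.support, x ≤ u := fun x hx =>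
    Finset.le_max' _ x (List.mem_toFinset.mpr hx)
  have hc' := hc.rotate hu
  have hsup : ∀ x ∈ (c.rotate u hu).support, x ≤ u := by
    intro x hx
    rw [(c.rotate u hu).support_eq_cons] at hx
    rcases List.mem_cons.mp hx with h | h
    · exact h ▸ le_refl u
    · have : x ∈ c.support.tail := ((c.support_rotate u hu).perm.mem_iff).mp h
      exact hmax x (List.mem_of_mem_tail this)
  have hlen := hc'.three_le_length
  cases hcc : c.rotate u hu with
  | nil => rw [hcc] at hc'; exact hc'.ne_nil rfl
  | @cons _ b _ h p =>
    rw [hcc] at hc' hsup hlen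
    -- h : (pg m f).Adj u b, p : Walk b u
    have hbmem : b ∈ (SimpleGraph.Walk.cons h p).support := by
      simp [SimpleGraph.Walk.support_cons]
    have hb : b.val = f u.val := adj_max hf hf0 h (hsup b hbmem)
    have hplen : 2 ≤ p.length := by
      simp only [SimpleGraph.Walk.length_cons] at hlen; omega
    have hi : p.length - 1 < p.length := by omega
    have hadj := p.adj_getVert_succ hi
    have hgl : p.getVert (p.length - 1 + 1) = u := by
      have : p.length - 1 + 1 = p.length := by omega
      rw [this, p.getVert_length]
    rw [hgl] at hadj
    set y := p.getVert (p.length - 1) with hy_def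
    have hymem : y ∈ (SimpleGraph.Walk.cons h p).support := by
      simp only [SimpleGraph.Walk.support_cons, List.mem_cons]
      exact Or.inr (getVert_mem_support p _)
    have hyval : y.val = f u.val := adj_max hf hf0 hadj.symm (hsup y hymem)
    have hyb : y = b := Fin.ext (hyval.trans hb.symm)
    have hpath : p.IsPath := ((SimpleGraph.Walk.cons_isCycle_iff p h).mp hc').1
    have : p.length - 1 = 0 := by
      apply getVert_eq_zero_of_isPath p hpath (by omega)
      rw [← hy_def, hyb]
    omega

lemma pg_connected (hm : 0 < m) (hf : ∀ x, 0 < x → x < m → f x < x) :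
    (pg m f).Connected := by
  have key : ∀ k, ∀ i : Fin m, i.val = k → (pg m f).Reachable i ⟨0, hm⟩ := by
    intro k
    induction k using Nat.strong_induction_on with
    | _ k ih =>
      intro i hik
      by_cases h0 : i.val = 0
      · exact (Fin.ext h0 : i = ⟨0, hm⟩) ▸ SimpleGraph.Reachable.refl _
      · have hlt : f i.val < i.val := hf i.val (Nat.pos_of_ne_zero h0) i.isLt
        have hadj : (pg m f).Adj i ⟨f i.val, lt_trans hlt i.isLt⟩ :=
          ⟨fun hh => by have := congrArg Fin.val hh; simp only [] at this; omega, Or.inl rfl⟩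
        exact hadj.reachable.trans (ih (f i.val) (hik ▸ hlt) _ rfl)
  rw [SimpleGraph.connected_iff]
  exact ⟨fun i j => (key i.val i rfl).trans (key j.val j rfl).symm, ⟨⟨0, hm⟩⟩⟩

lemma pg_isTree (hm : 0 < m) (hf : ∀ x, 0 < x → x < m → f x < x) (hf0 : f 0 = 0) :
    (pg m f).IsTree :=
  ⟨pg_connected hm hf, pg_acyclic hf hf0⟩



lemma card_filter_val (m : ℕ) (g : ℕ → ℕ) (w : ℕ) :
    (Finset.univ.filter (fun x : Fin m => x.val ≠ 0 ∧ g x.val = w)).card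
      = ((Finset.range m).filter (fun x => x ≠ 0 ∧ g x = w)).card := by
  apply Finset.card_bij (fun x _ => x.val)
  · intro x hx
    simp only [Finset.mem_filter, Finset.mem_range, Finset.mem_univ, true_and] at *
    exact ⟨x.isLt, hx⟩
  · intro x _ y _ hxy; exact Fin.ext hxy
  · intro x hx
    simp only [Finset.mem_filter, Finset.mem_range] at hx
    exact ⟨⟨x, hx.1⟩, by simp [hx.2], rfl⟩

lemma pg_degree (hf : ∀ x, 0 < x → x < m → f x < x) (hf0 : f 0 = 0) (v : Fin m) :
    (pg m f).degree v =
      ((Finset.range m).filter fun x => x ≠ 0 ∧ f x = v.val).card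
        + (if v.val = 0 then 0 else 1) := by
  rw [← SimpleGraph.card_neighborFinset_eq_degree, SimpleGraph.neighborFinset_eq_filter]
  by_cases hv : v.val = 0
  · rw [if_pos hv, add_zero]
    have hset : Finset.univ.filter ((pg m f).Adj v)
        = Finset.univ.filter (fun x : Fin m => x.val ≠ 0 ∧ f x.val = v.val) := by
      apply Finset.filter_congr
      intro x _
      constructor
      · rintro ⟨hne, hc | hc⟩
        · exfalso
          have hx0 : x.val = 0 := by
            have : f v.val = 0 := by rw [hv, hf0]
            omega
          exact hne (Fin.ext (by omega))
        · exact ⟨fun h0 => hne (Fin.ext (by omega)), hc⟩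
      · rintro ⟨hx0, hc⟩
        exact ⟨fun h => hx0 (h ▸ hv), Or.inr hc⟩
    rw [hset]
    exact card_filter_val m f v.val
  · have hfv : f v.val < v.val := hf _ (Nat.pos_of_ne_zero hv) v.isLt
    set P : Fin m := ⟨f v.val, lt_trans hfv v.isLt⟩ with hP
    have hset : Finset.univ.filter ((pg m f).Adj v)
        = insert P (Finset.univ.filter (fun x : Fin m => x.val ≠ 0 ∧ f x.val = v.val)) := by
      ext x
      simp only [Finset.mem_filter, Finset.mem_univ, true_and, Finset.mem_insert]
      constructor
      · rintro ⟨hne, hc | hc⟩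
        · exact Or.inl (Fin.ext hc.symm)
        · refine Or.inr ⟨fun h0 => ?_, hc⟩
          rw [h0, hf0] at hc
          exact hv hc.symm
      · rintro (rfl | ⟨hx0, hc⟩)
        · exact ⟨fun h => by have := congrArg Fin.val h; simp only [hP] at this; omega,
            Or.inl rfl⟩
        · have hxv : f x.val < x.val := hf _ (Nat.pos_of_ne_zero hx0) x.isLt
          exact ⟨fun h => by have := congrArg Fin.val h; omega, Or.inr hc⟩
    rw [hset, Finset.card_insert_of_notMem, if_neg hv, card_filter_val m f v.val]
    intro hPmem
    have hprop := (Finset.mem_filter.mp hPmem).2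
    obtain ⟨h0, hc⟩ := hprop
    have hPval : P.val = f v.val := rfl
    rcases Nat.eq_zero_or_pos (f v.val) with hz | hpos
    · exact h0 (hPval.trans hz)
    · have := hf (f v.val) hpos (lt_trans hfv v.isLt)
      rw [hPval] at hc
      omega


def F (a : ℕ) : ℕ → ℕ := fun x =>
  if x ≤ a then x - 1 else if x = 3*a+3 then a else (x - (a+1))/2

lemma F_lt (a : ℕ) : ∀ x, 0 < x → x < 3*a+4 → F a x < x := by
  intro x hx hxm; unfold F; split_ifs <;> omega

lemma F0 (a : ℕ) : F a 0 = 0 := by unfold F; simp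

lemma F_count (a v : ℕ) :
    ((Finset.range (3*a+4)).filter fun x => x ≠ 0 ∧ F a x = v).card
      = if v ≤ a then 3 else 0 := by
  rcases lt_trichotomy v a with h | h | h
  · rw [if_pos (le_of_lt h)]
    have hset : ((Finset.range (3*a+4)).filter fun x => x ≠ 0 ∧ F a x = v)
        = {v+1, a+1+2*v, a+2+2*v} := by
      ext x
      simp only [Finset.mem_filter, Finset.mem_range, Finset.mem_insert, Finset.mem_singleton]
      unfold F; split_ifs <;> omega
    rw [hset, Finset.card_insert_of_notMem (by simp only [Finset.mem_insert, Finset.mem_singleton]; omega),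
      Finset.card_insert_of_notMem (by simp only [Finset.mem_insert, Finset.mem_singleton]; omega), Finset.card_singleton]
  · rw [if_pos h.le]
    have hset : ((Finset.range (3*a+4)).filter fun x => x ≠ 0 ∧ F a x = v)
        = {3*a+1, 3*a+2, 3*a+3} := by
      ext x
      simp only [Finset.mem_filter, Finset.mem_range, Finset.mem_insert, Finset.mem_singleton]
      unfold F; split_ifs <;> omega
    rw [hset, Finset.card_insert_of_notMem (by simp only [Finset.mem_insert, Finset.mem_singleton]; omega),
      Finset.card_insert_of_notMem (by simp only [Finset.mem_insert, Finset.mem_singleton]; omega), Finset.card_singleton]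
  · rw [if_neg (by omega), Finset.card_eq_zero]
    ext x
    simp only [Finset.mem_filter, Finset.mem_range, Finset.notMem_empty, iff_false, not_and]
    intro h1 h2
    unfold F; split_ifs <;> omega



theorem part2 (n : ℕ) (hn : 3 ≤ n)
    (V : Type) [Fintype V] (G : SimpleGraph V) [DecidableRel G.Adj]
    (hT : G.IsTree) (hP : (Finset.univ.filter fun v => G.degree v = 1).card = n)
    (hU : ∃! w : V, G.degree w = 3)
    (hD : ∀ v, G.degree v ≠ 1 → G.degree v ≠ 3 → G.degree v = 4) :
    ∑ v : V, (G.degree v : ℤ) ^ 2 = 9 * n - 15 := by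
  obtain ⟨w, hw, hwu⟩ := hU
  set A1 := Finset.univ.filter (fun v => G.degree v = 1) with hA1
  set A3 := Finset.univ.filter (fun v => G.degree v = 3) with hA3
  set A4 := Finset.univ.filter (fun v => G.degree v = 4) with hA4
  have hA3card : A3.card = 1 := by
    rw [Finset.card_eq_one]
    refine ⟨w, ?_⟩
    ext v
    simp only [hA3, Finset.mem_filter, Finset.mem_univ, true_and, Finset.mem_singleton]
    exact ⟨fun h => hwu v h, fun h => h ▸ hw⟩
  have hdisj13 : Disjoint A1 A3 := by
    rw [Finset.disjoint_left]
    intro x h1 h3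
    simp only [hA1, Finset.mem_filter, Finset.mem_univ, true_and] at h1
    simp only [hA3, Finset.mem_filter, Finset.mem_univ, true_and] at h3
    omega
  have hdisj134 : Disjoint (A1 ∪ A3) A4 := by
    rw [Finset.disjoint_left]
    intro x h13 h4
    simp only [hA1, hA3, Finset.mem_union, Finset.mem_filter, Finset.mem_univ, true_and] at h13
    simp only [hA4, Finset.mem_filter, Finset.mem_univ, true_and] at h4
    omega
  have hcover : A1 ∪ A3 ∪ A4 = Finset.univ := by
    ext v
    simp only [hA1, hA3, hA4, Finset.mem_union, Finset.mem_filter, Finset.mem_univ, true_and,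
      iff_true]
    by_cases h1 : G.degree v = 1
    · tauto
    by_cases h3 : G.degree v = 3
    · tauto
    exact Or.inr (hD v h1 h3)
  have key : ∀ g : ℕ → ℕ, ∑ v : V, g (G.degree v) = n * g 1 + g 3 + A4.card * g 4 := by
    intro g
    have e1 : ∀ v ∈ A1, g (G.degree v) = g 1 := fun v hv => by
      simp only [hA1, Finset.mem_filter, Finset.mem_univ, true_and] at hv; rw [hv]
    have e3 : ∀ v ∈ A3, g (G.degree v) = g 3 := fun v hv => by
      simp only [hA3, Finset.mem_filter, Finset.mem_univ, true_and] at hv; rw [hv]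
    have e4 : ∀ v ∈ A4, g (G.degree v) = g 4 := fun v hv => by
      simp only [hA4, Finset.mem_filter, Finset.mem_univ, true_and] at hv; rw [hv]
    calc ∑ v : V, g (G.degree v) = ∑ v ∈ A1 ∪ A3 ∪ A4, g (G.degree v) := by rw [hcover]
      _ = ∑ v ∈ A1 ∪ A3, g (G.degree v) + ∑ v ∈ A4, g (G.degree v) :=
          Finset.sum_union hdisj134
      _ = (∑ v ∈ A1, g (G.degree v) + ∑ v ∈ A3, g (G.degree v)) + ∑ v ∈ A4, g (G.degree v) := by
          rw [Finset.sum_union hdisj13]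
      _ = n * g 1 + g 3 + A4.card * g 4 := by
          rw [Finset.sum_congr rfl e1, Finset.sum_congr rfl e3, Finset.sum_congr rfl e4,
            Finset.sum_const, Finset.sum_const, Finset.sum_const, hP, hA3card]
          simp [Nat.smul_one_eq_cast, mul_comm]
  have hN : Fintype.card V = n + 1 + A4.card := by
    rw [← Finset.card_univ, ← hcover, Finset.card_union_of_disjoint hdisj134,
      Finset.card_union_of_disjoint hdisj13, hP, hA3card]
  have hE := hT.card_edgeFinset
  have hs := G.sum_degrees_eq_twice_card_edges
  have hs' : n * 1 + 3 + A4.card * 4 = 2 * G.edgeFinset.card := by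
    rw [← hs]
    exact (key id).symm
  have hsq : ∑ v : V, (G.degree v) ^ 2 = n * 1 + 9 + A4.card * 16 := by
    have := key (· ^ 2)
    simpa using this
  have hcast : ∑ v : V, (G.degree v : ℤ) ^ 2 = ((∑ v : V, (G.degree v) ^ 2 : ℕ) : ℤ) := by
    push_cast
    rfl
  rw [hcast, hsq]
  push_cast
  omega


lemma card_filter_lt' (m a : ℕ) :
    (Finset.univ.filter (fun v : Fin m => a < v.val)).card
      = ((Finset.range m).filter (fun x => a < x)).card := by
  apply Finset.card_bij (fun x _ => x.val)
  · intro x hx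
    simp only [Finset.mem_filter, Finset.mem_range, Finset.mem_univ, true_and] at *
    exact ⟨x.isLt, hx⟩
  · intro x _ y _ hxy; exact Fin.ext hxy
  · intro x hx
    simp only [Finset.mem_filter, Finset.mem_range] at hx
    exact ⟨⟨x, hx.1⟩, by simp [hx.2], rfl⟩

theorem part1 (n : ℕ) (hn : 3 ≤ n) (hodd : Odd n) :
    ∃ (m : ℕ) (G : SimpleGraph (Fin m)),
      G.IsTree ∧ (Finset.univ.filter fun v => G.degree v = 1).card = n ∧
      (∃! w : Fin m, G.degree w = 3) ∧
      (∀ v, G.degree v ≠ 1 → G.degree v ≠ 3 → G.degree v = 4) := by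
  obtain ⟨b, hb⟩ := hodd
  set a := b - 1 with hadef
  have hna : n = 2*a + 3 := by omega
  have hdeg : ∀ v : Fin (3*a+4), (pg (3*a+4) (F a)).degree v
      = if v.val = 0 then 3 else if v.val ≤ a then 4 else 1 := by
    intro v
    rw [pg_degree (F_lt a) (F0 a) v, F_count]
    split_ifs <;> omega
  refine ⟨3*a+4, pg (3*a+4) (F a), pg_isTree (by omega) (F_lt a) (F0 a), ?_, ?_, ?_⟩
  · have h1 : (Finset.univ.filter fun v : Fin (3*a+4) => (pg (3*a+4) (F a)).degree v = 1)
        = Finset.univ.filter (fun v : Fin (3*a+4) => a < v.val) := by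
      apply Finset.filter_congr
      intro v _
      rw [hdeg v]
      constructor
      · intro h; split_ifs at h <;> omega
      · intro h; split_ifs <;> omega
    rw [h1, card_filter_lt']
    have h2 : ((Finset.range (3*a+4)).filter (fun x => a < x)) = Finset.Ico (a+1) (3*a+4) := by
      ext x
      simp only [Finset.mem_filter, Finset.mem_range, Finset.mem_Ico]
      omega
    rw [h2, Nat.card_Ico]
    omega
  · refine ⟨⟨0, by omega⟩, ?_, ?_⟩
    · show (pg (3*a+4) (F a)).degree ⟨0, by omega⟩ = 3
      rw [hdeg]; simp
    · intro y hy
      rw [hdeg y] at hy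
      split_ifs at hy with h1 h2
      · exact Fin.ext h1
      · omega
      · omega
  · intro v h1 h3
    rw [hdeg v] at h1 h3 ⊢
    split_ifs at h1 h3 ⊢ <;> omega

end Aux5

/-- For every odd `n ≥ 3` there exists a tree with exactly `n` pendent vertices in which
all internal vertices have degree 4 except exactly one of degree 3, and any such tree
satisfies `M₁(T) = 9n - 15`. -/
theorem stmt_5 (n : ℕ) (hn : 3 ≤ n) (hodd : Odd n) :
    (∃ (m : ℕ) (G : SimpleGraph (Fin m)),
      G.IsTree ∧ (Finset.univ.filter fun v => G.degree v = 1).card = n ∧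
      (∃! w : Fin m, G.degree w = 3) ∧
      (∀ v, G.degree v ≠ 1 → G.degree v ≠ 3 → G.degree v = 4)) ∧
    (∀ (V : Type) [Fintype V] (G : SimpleGraph V) [DecidableRel G.Adj],
      G.IsTree → (Finset.univ.filter fun v => G.degree v = 1).card = n →
      (∃! w : V, G.degree w = 3) →
      (∀ v, G.degree v ≠ 1 → G.degree v ≠ 3 → G.degree v = 4) →
      ∑ v : V, (G.degree v : ℤ) ^ 2 = 9 * n - 15) :=
  ⟨Aux5.part1 n hn hodd,
   fun V _ G _ hT hP hU hD => Aux5.part2 n hn V G hT hP hU hD⟩
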